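/- Let N ≥ 2, ℓ₁,…,ℓ_N > 0 with ∑ ℓ_n = 1, let ε > 0, η ∈ (0,1) with εη < 1, and let u = (u₁,…,u_N) satisfy 0 < u₁ ≤ ⋯ ≤ u_N = 1. Define the candidate firing times T⁺ = (1−εη) u₁ + εη ∑_{n=1}^N ℓ_n u_n − η and, if ℓ₁ < 1, T⁻ = (1/(1−ℓ₁)) (∑_{n=2}^N ℓ_n u_n − 1/ε). Then T⁺ ≤ u₁ if and only if T⁻ ≤ T⁺, and T⁺ ≥ u₁ if and only if T⁻ ≥ T⁺; hence the function T_ℓ(u) := T⁺ if T⁺ ≤ u₁ and T_ℓ(u) := T⁻ otherwise, is a continuous function of u. -/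

import Mathlib

open Finset

/-- Candidate firing time assuming the lowest group fires before reaching level 0. -/
noncomputable def Tplus (N : ℕ) (ℓ : ℕ → ℝ) (ε η : ℝ) (v : ℕ → ℝ) : ℝ :=
  (1 - ε * η) * v 1 + ε * η * ∑ n ∈ Icc 1 N, ℓ n * v n - η

/-- Candidate firing time assuming the lowest group reaches level 0 before firing. -/
noncomputable def Tminus (N : ℕ) (ℓ : ℕ → ℝ) (ε : ℝ) (v : ℕ → ℝ) : ℝ :=
  (1 / (1 - ℓ 1)) * ((∑ n ∈ Icc 2 N, ℓ n * v n) - 1 / ε)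

/-- The firing time function: `T⁺` if `T⁺ ≤ v 1`, and `T⁻` otherwise. -/
noncomputable def Tfire (N : ℕ) (ℓ : ℕ → ℝ) (ε η : ℝ) (v : ℕ → ℝ) : ℝ :=
  if Tplus N ℓ ε η v ≤ v 1 then Tplus N ℓ ε η v else Tminus N ℓ ε v

lemma key_id (N : ℕ) (hN : 2 ≤ N) (ℓ : ℕ → ℝ) (ε η : ℝ) (hε : 0 < ε) (hη : 0 < η)
    (hℓ1 : ℓ 1 < 1) (v : ℕ → ℝ) :
    Tminus N ℓ ε v - Tplus N ℓ ε η v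
      = ((1 - ε * η * (1 - ℓ 1)) / (ε * η * (1 - ℓ 1))) * (Tplus N ℓ ε η v - v 1) := by
  have hsplit : ∑ n ∈ Icc 1 N, ℓ n * v n = ℓ 1 * v 1 + ∑ n ∈ Icc 2 N, ℓ n * v n := by
    have : Icc 1 N = insert 1 (Icc 2 N) := by
      ext x; simp only [mem_Icc, mem_insert]; omega
    rw [this, sum_insert (by simp)]
  have h1 : (1 : ℝ) - ℓ 1 ≠ 0 := by linarith
  unfold Tminus Tplus
  rw [hsplit]
  field_simp
  ring

theorem stmt18 (N : ℕ) (hN : 2 ≤ N) (ℓ : ℕ → ℝ)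
    (hℓpos : ∀ n ∈ Icc 1 N, 0 < ℓ n) (hℓsum : ∑ n ∈ Icc 1 N, ℓ n = 1) (hℓ1 : ℓ 1 < 1)
    (ε η : ℝ) (hε : 0 < ε) (hη : η ∈ Set.Ioo (0:ℝ) 1) (hεη : ε * η < 1)
    (u : ℕ → ℝ) (hu1 : 0 < u 1) (humono : MonotoneOn u (Icc 1 N)) (huN : u N = 1) :
    ((Tplus N ℓ ε η u ≤ u 1 ↔ Tminus N ℓ ε u ≤ Tplus N ℓ ε η u) ∧
     (u 1 ≤ Tplus N ℓ ε η u ↔ Tplus N ℓ ε η u ≤ Tminus N ℓ ε u)) ∧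
    Continuous (Tfire N ℓ ε η) := by
  obtain ⟨hη0, hη1⟩ := hη
  have hℓ1pos : 0 < ℓ 1 := hℓpos 1 (by simp [mem_Icc]; omega)
  have hd : 0 < ε * η * (1 - ℓ 1) := mul_pos (mul_pos hε hη0) (by linarith)
  have hc : 0 < (1 - ε * η * (1 - ℓ 1)) / (ε * η * (1 - ℓ 1)) := by
    apply div_pos _ hd
    nlinarith
  constructor
  · have hid := key_id N hN ℓ ε η hε hη0 hℓ1 u
    constructor
    · constructor <;> intro h <;> nlinarith
    · constructor <;> intro h <;> nlinarith
  · have heq : Tfire N ℓ ε η = fun v => max (Tplus N ℓ ε η v) (Tminus N ℓ ε v) := by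
      funext v
      have hid := key_id N hN ℓ ε η hε hη0 hℓ1 v
      unfold Tfire
      split_ifs with h
      · exact (max_eq_left (by nlinarith)).symm
      · push_neg at h
        exact (max_eq_right (by nlinarith)).symm
    rw [heq]
    have hp : Continuous (fun v : ℕ → ℝ => Tplus N ℓ ε η v) := by
      unfold Tplus
      exact (((continuous_const.mul (continuous_apply 1)).add
        (continuous_const.mul (continuous_finset_sum _ fun n _ =>
          continuous_const.mul (continuous_apply n)))).sub continuous_const)
    have hm : Continuous (fun v : ℕ → ℝ => Tminus N ℓ ε v) := by
      unfold Tminus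
      exact continuous_const.mul ((continuous_finset_sum _ fun n _ =>
        continuous_const.mul (continuous_apply n)).sub continuous_const)
    exact hp.max hm
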